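/- Let Σ be a positive definite real d×d matrix, a ∈ ℝ^d, and ε ≥ 0. Then the minimum of ε·‖w‖₁ − wᵀa over all w ∈ ℝ^d with wᵀΣw ≤ 1 equals the negative of the minimum of sqrt((z − a)ᵀ Σ^{−1} (z − a)) over all z ∈ ℝ^d with ‖z‖_∞ ≤ ε; i.e., min_{wᵀΣw ≤ 1} (ε‖w‖₁ − wᵀa) = − min_{‖z‖_∞ ≤ ε} ‖z − a‖_{Σ^{−1}}, where ‖v‖_{Σ^{−1}} := sqrt(vᵀ Σ^{−1} v). -/

import Mathlib

open Finset Matrix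

lemma qsym {d : ℕ} (S : Matrix (Fin d) (Fin d) ℝ) (hSt : Sᵀ = S) (x y : Fin d → ℝ) :
    x ⬝ᵥ (S *ᵥ y) = y ⬝ᵥ (S *ᵥ x) := by
  rw [dotProduct_mulVec, ← mulVec_transpose, hSt, dotProduct_comm]

lemma cs_aux {d : ℕ} (S : Matrix (Fin d) (Fin d) ℝ) (hS : S.PosDef) (w u : Fin d → ℝ) :
    (w ⬝ᵥ u)^2 ≤ (w ⬝ᵥ (S *ᵥ w)) * (u ⬝ᵥ (S⁻¹ *ᵥ u)) := by
  set M := S⁻¹ with hMdef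
  set g := M *ᵥ u with hgdef
  have hSg : S *ᵥ g = u := by
    rw [hgdef, mulVec_mulVec, S.mul_nonsing_inv (isUnit_iff_ne_zero.mpr hS.det_pos.ne'),
      one_mulVec]
  have hexp : ∀ t : ℝ, 0 ≤ (u ⬝ᵥ (M *ᵥ u)) * (t * t) + (2 * (w ⬝ᵥ u)) * t + (w ⬝ᵥ (S *ᵥ w)) := by
    intro t
    have h0 : 0 ≤ (w + t • g) ⬝ᵥ (S *ᵥ (w + t • g)) := by
      have := hS.posSemidef.dotProduct_mulVec_nonneg (w + t • g); simpa using this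
    have hexp2 : (w + t • g) ⬝ᵥ (S *ᵥ (w + t • g)) =
        w ⬝ᵥ (S *ᵥ w) + t * (w ⬝ᵥ (S *ᵥ g)) + t * (g ⬝ᵥ (S *ᵥ w)) + t^2 * (g ⬝ᵥ (S *ᵥ g)) := by
      simp [mulVec_add, mulVec_smul, dotProduct_add, add_dotProduct, dotProduct_smul,
        smul_dotProduct, smul_eq_mul]
      ring
    have h1 : g ⬝ᵥ (S *ᵥ w) = w ⬝ᵥ u := by rw [qsym S hS.1 g w, hSg]
    have h2 : w ⬝ᵥ (S *ᵥ g) = w ⬝ᵥ u := by rw [hSg]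
    have h3 : g ⬝ᵥ (S *ᵥ g) = u ⬝ᵥ (M *ᵥ u) := by rw [hSg, dotProduct_comm]
    rw [hexp2, h1, h2, h3] at h0; nlinarith [h0]
  have hd := discrim_le_zero hexp
  rw [discrim] at hd
  nlinarith [hd]

lemma diag_pos {d : ℕ} (M : Matrix (Fin d) (Fin d) ℝ) (hM : M.PosDef) (j : Fin d) :
    0 < M j j := by
  have h := hM.dotProduct_mulVec_pos (x := Pi.single j 1) (by
    intro h
    have := congrFun h j
    simp at this)
  simpa [dotProduct, mulVec, Pi.single_apply, Finset.mul_sum] using h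

lemma quad_expand {d : ℕ} (M : Matrix (Fin d) (Fin d) ℝ) (hMt : Mᵀ = M)
    (u e : Fin d → ℝ) (s : ℝ) :
    (u + s • e) ⬝ᵥ (M *ᵥ (u + s • e)) =
      u ⬝ᵥ (M *ᵥ u) + 2 * s * (e ⬝ᵥ (M *ᵥ u)) + s^2 * (e ⬝ᵥ (M *ᵥ e)) := by
  have h1 : u ⬝ᵥ (M *ᵥ e) = e ⬝ᵥ (M *ᵥ u) := qsym M hMt u e
  simp [mulVec_add, mulVec_smul, dotProduct_add, add_dotProduct, dotProduct_smul,
    smul_dotProduct, smul_eq_mul]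
  rw [h1]; ring

lemma single_dot {d : ℕ} (M : Matrix (Fin d) (Fin d) ℝ) (j : Fin d) (v : Fin d → ℝ) :
    (Pi.single j 1 : Fin d → ℝ) ⬝ᵥ (M *ᵥ v) = (M *ᵥ v) j := by
  simp [dotProduct, Pi.single_apply]

lemma kkt {d : ℕ} (M : Matrix (Fin d) (Fin d) ℝ) (hM : M.PosDef) (a zs : Fin d → ℝ)
    (ε : ℝ) (hzs : ∀ i, |zs i| ≤ ε)
    (hmin : ∀ z : Fin d → ℝ, (∀ i, |z i| ≤ ε) →
      (zs - a) ⬝ᵥ (M *ᵥ (zs - a)) ≤ (z - a) ⬝ᵥ (M *ᵥ (z - a)))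
    (j : Fin d) :
    (M *ᵥ (zs - a)) j * zs j + ε * |(M *ᵥ (zs - a)) j| = 0 := by
  set u := zs - a with hu
  set g := M *ᵥ u with hg
  have hMjj : 0 < M j j := diag_pos M hM j
  have hq : ∀ s : ℝ, |zs j + s| ≤ ε → 0 ≤ 2 * s * g j + s^2 * M j j := by
    intro s hs
    have hz : ∀ i, |(zs + s • (Pi.single j 1 : Fin d → ℝ)) i| ≤ ε := by
      intro i
      by_cases h : i = j
      · subst h; simpa using hs
      · simpa [Pi.single_apply, h] using hzs i
    have hle := hmin _ hz
    have heq : (zs + s • (Pi.single j 1 : Fin d → ℝ)) - a = u + s • (Pi.single j 1 : Fin d → ℝ) := by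
      rw [hu]; abel
    rw [heq, quad_expand M hM.1 u (Pi.single j 1) s, single_dot, single_dot, ← hg] at hle
    have hMjj' : (M *ᵥ (Pi.single j 1 : Fin d → ℝ)) j = M j j := by
      simp [mulVec, dotProduct, Pi.single_apply]
    rw [hMjj'] at hle
    linarith
  rcases lt_trichotomy (g j) 0 with hgj | hgj | hgj
  · -- g j < 0 ⇒ zs j = ε
    have hzj : zs j = ε := by
      by_contra hne
      have h1 : zs j < ε := lt_of_le_of_ne (abs_le.mp (hzs j)).2 hne
      set m := min (ε - zs j) (-(g j) / M j j) with hm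
      have hm1 : 0 < m := lt_min (by linarith) (div_pos (by linarith) hMjj)
      have hm2 : m * M j j ≤ -(g j) := (le_div_iff₀ hMjj).mp (min_le_right _ _)
      have habs : |zs j + m| ≤ ε := by
        rw [abs_le]
        constructor
        · have := (abs_le.mp (hzs j)).1; linarith
        · have := min_le_left (ε - zs j) (-(g j) / M j j); linarith
      have := hq m habs
      nlinarith [mul_pos hm1 (neg_pos.mpr hgj)]
    rw [hzj, abs_of_neg hgj]; ring
  · simp [hgj]
  · -- g j > 0 ⇒ zs j = -ε
    have hzj : zs j = -ε := by
      by_contra hne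
      have h1 : -ε < zs j := lt_of_le_of_ne (abs_le.mp (hzs j)).1 (Ne.symm hne)
      set m := min (zs j + ε) (g j / M j j) with hm
      have hm1 : 0 < m := lt_min (by linarith) (div_pos hgj hMjj)
      have hm2 : m * M j j ≤ g j := (le_div_iff₀ hMjj).mp (min_le_right _ _)
      have habs : |zs j + (-m)| ≤ ε := by
        rw [abs_le]
        constructor
        · have := min_le_left (zs j + ε) (g j / M j j); linarith
        · have := (abs_le.mp (hzs j)).2; linarith
      have := hq (-m) habs
      nlinarith [mul_pos hm1 hgj]
    rw [hzj, abs_of_pos hgj]; ring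

theorem stmt_11 (d : ℕ) (S : Matrix (Fin d) (Fin d) ℝ) (hS : S.PosDef)
    (a : Fin d → ℝ) (ε : ℝ) (hε : 0 ≤ ε) :
    sInf {v : ℝ | ∃ w : Fin d → ℝ, w ⬝ᵥ (S *ᵥ w) ≤ 1 ∧
        v = ε * (∑ j, |w j|) - w ⬝ᵥ a}
      = - sInf {v : ℝ | ∃ z : Fin d → ℝ, (∀ i, |z i| ≤ ε) ∧
          v = Real.sqrt ((z - a) ⬝ᵥ (S⁻¹ *ᵥ (z - a)))} := by
  set M := S⁻¹ with hMdef
  have hM : M.PosDef := hS.inv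
  have qnn : ∀ x : Fin d → ℝ, 0 ≤ x ⬝ᵥ (M *ᵥ x) := fun x => by
    have := hM.posSemidef.dotProduct_mulVec_nonneg x; simpa using this
  set Q : (Fin d → ℝ) → ℝ := fun z => (z - a) ⬝ᵥ (M *ᵥ (z - a)) with hQdef
  set K : Set (Fin d → ℝ) := {z | ∀ i, |z i| ≤ ε} with hKdef
  have hKc : IsCompact K := by
    have : K = Set.pi Set.univ (fun _ => Set.Icc (-ε) ε) := by
      ext z
      simp only [hKdef, Set.mem_setOf_eq, Set.mem_univ_pi, Set.mem_Icc, abs_le]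
    rw [this]
    exact isCompact_univ_pi fun _ => isCompact_Icc
  have hKne : K.Nonempty := ⟨0, fun i => by simpa using hε⟩
  have hQc : Continuous Q := by
    simp only [hQdef, dotProduct, mulVec]
    fun_prop
  obtain ⟨zs, hzsK, hzsmin⟩ := hKc.exists_isMinOn hKne hQc.continuousOn
  have hmin : ∀ z : Fin d → ℝ, (∀ i, |z i| ≤ ε) → Q zs ≤ Q z := fun z hz =>
    isMinOn_iff.mp hzsmin z hz
  set t := Real.sqrt (Q zs) with ht
  have ht0 : 0 ≤ t := Real.sqrt_nonneg _
  have ht2 : t^2 = Q zs := Real.sq_sqrt (qnn _)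
  -- sInf of RHS set equals t
  have hB : sInf {v : ℝ | ∃ z : Fin d → ℝ, (∀ i, |z i| ≤ ε) ∧
      v = Real.sqrt ((z - a) ⬝ᵥ (M *ᵥ (z - a)))} = t := by
    apply le_antisymm
    · apply csInf_le
      · exact ⟨0, by rintro v ⟨z, hz, rfl⟩; exact Real.sqrt_nonneg _⟩
      · exact ⟨zs, hzsK, rfl⟩
    · refine le_csInf ⟨t, zs, hzsK, rfl⟩ ?_
      rintro v ⟨z, hz, rfl⟩
      exact Real.sqrt_le_sqrt (hmin z hz)
  rw [hB]
  -- now show sInf A = -t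
  set A : Set ℝ := {v : ℝ | ∃ w : Fin d → ℝ, w ⬝ᵥ (S *ᵥ w) ≤ 1 ∧
      v = ε * (∑ j, |w j|) - w ⬝ᵥ a} with hAdef
  have hAne : (0 : ℝ) ∈ A := by
    refine ⟨0, by simp, by simp⟩
  have hlow : ∀ v ∈ A, -t ≤ v := by
    rintro v ⟨w, hw, rfl⟩
    have h1 : w ⬝ᵥ zs ≤ ε * ∑ j, |w j| := by
      rw [Finset.mul_sum]
      apply Finset.sum_le_sum
      intro j _
      calc w j * zs j ≤ |w j * zs j| := le_abs_self _
        _ = |w j| * |zs j| := abs_mul _ _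
        _ ≤ |w j| * ε := mul_le_mul_of_nonneg_left (hzsK j) (abs_nonneg _)
        _ = ε * |w j| := mul_comm _ _
    have hcs := cs_aux S hS w (zs - a)
    rw [← hMdef] at hcs
    have hwS : 0 ≤ w ⬝ᵥ (S *ᵥ w) := by have := hS.posSemidef.dotProduct_mulVec_nonneg w; simpa using this
    have h2 : (w ⬝ᵥ (zs - a))^2 ≤ t^2 := by
      rw [ht2]
      calc (w ⬝ᵥ (zs - a))^2 ≤ (w ⬝ᵥ (S *ᵥ w)) * Q zs := hcs
        _ ≤ 1 * Q zs := mul_le_mul_of_nonneg_right hw (qnn _)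
        _ = Q zs := one_mul _
    have h3 : -t ≤ w ⬝ᵥ (zs - a) := by nlinarith [h2, ht0]
    have h4 : w ⬝ᵥ (zs - a) = w ⬝ᵥ zs - w ⬝ᵥ a := by
      rw [dotProduct_sub]
    linarith [h1, h3, h4.symm.le, h4.le]
  apply le_antisymm
  · -- sInf A ≤ -t : exhibit witness
    rcases eq_or_lt_of_le ht0 with h0 | h0
    · rw [← h0, neg_zero]
      exact csInf_le ⟨-t, hlow⟩ hAne
    · -- t > 0 case
      have hQpos : 0 < Q zs := by nlinarith
      set u := zs - a with hu
      set g := M *ᵥ u with hg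
      set w : Fin d → ℝ := (-t⁻¹) • g with hw
      have hSg : S *ᵥ g = u := by
        rw [hg, mulVec_mulVec, hMdef, S.mul_nonsing_inv (isUnit_iff_ne_zero.mpr hS.det_pos.ne'),
          one_mulVec]
      have hgu : g ⬝ᵥ u = Q zs := by rw [hg, dotProduct_comm, hQdef]
      have hfeas : w ⬝ᵥ (S *ᵥ w) ≤ 1 := by
        have hex : w ⬝ᵥ (S *ᵥ w) = t⁻¹ * t⁻¹ * (g ⬝ᵥ (S *ᵥ g)) := by
          rw [hw, smul_dotProduct, mulVec_smul, dotProduct_smul, smul_eq_mul, smul_eq_mul]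
          ring
        rw [hex, hSg, hgu, ← ht2, pow_two]
        have hone : t⁻¹ * t⁻¹ * (t * t) = 1 := by field_simp
        rw [hone]
      have hkkt : ∀ j, g j * zs j + ε * |g j| = 0 := fun j => kkt M hM a zs ε hzsK hmin j
      have hval : ε * (∑ j, |w j|) - w ⬝ᵥ a = -t := by
        have hwz : ε * (∑ j, |w j|) = w ⬝ᵥ zs := by
          rw [Finset.mul_sum, dotProduct]
          apply Finset.sum_congr rfl
          intro j _
          have hj := hkkt j
          have : |w j| = t⁻¹ * |g j| := by
            rw [hw]
            simp [abs_mul, abs_of_pos (inv_pos.mpr h0)]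
          rw [this, hw]
          simp only [Pi.smul_apply, smul_eq_mul]
          have : ε * |g j| = -(g j * zs j) := by linarith
          rw [mul_comm ε _, mul_assoc, mul_comm (|g j|) ε, this]
          ring
        have hwu : w ⬝ᵥ u = -t := by
          rw [hw]
          have : ((-t⁻¹) • g) ⬝ᵥ u = (-t⁻¹) * (g ⬝ᵥ u) := by
            simp [smul_dotProduct, smul_eq_mul]
          rw [this, hgu, ← ht2, pow_two]
          field_simp
        have : w ⬝ᵥ a = w ⬝ᵥ zs - w ⬝ᵥ u := by
          rw [hu, dotProduct_sub]; ring
        rw [hwz, this, hwu]; ring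
      exact csInf_le ⟨-t, hlow⟩ ⟨w, hfeas, hval.symm⟩
  · exact le_csInf ⟨0, hAne⟩ hlow
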